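/- arXiv:1512.08250 — 11 statements merged into one kernel-verified Lean document; each statement's English description precedes it below -/
import Mathlib

section
/- The Schur complement admits the decomposition L_S = B_S Γ B_Sᵀ, where B_S = B₁(I − B₂⁺B₂) is the projected incidence matrix and L_S = B₁ΓB₁ᵀ − B₁ΓB₂ᵀ(B₂ΓB₂ᵀ)⁻¹B₂ΓB₁ᵀ. -/
open Matrix

theorem schur_complement_decomposition
    {n₁ n₂ m : ℕ} (hn₁ : 0 < n₁) (hn₂ : 0 < n₂) (hm : 0 < m)
    (B₁ : Matrix (Fin n₁) (Fin m) ℝ) (B₂ : Matrix (Fin n₂) (Fin m) ℝ)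
    (γ : Fin m → ℝ) (hγ : ∀ k, 0 < γ k)
    (hrank : B₂.rank = n₂)
    (hinv : IsUnit (B₂ * diagonal γ * B₂ᵀ).det) :
    B₁ * diagonal γ * B₁ᵀ -
      B₁ * diagonal γ * B₂ᵀ * (B₂ * diagonal γ * B₂ᵀ)⁻¹ * (B₂ * diagonal γ * B₁ᵀ) =
    (B₁ * (1 - (diagonal γ * B₂ᵀ * (B₂ * diagonal γ * B₂ᵀ)⁻¹) * B₂)) *
      diagonal γ *
    (B₁ * (1 - (diagonal γ * B₂ᵀ * (B₂ * diagonal γ * B₂ᵀ)⁻¹) * B₂))ᵀ := by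
  set G := diagonal γ with hG
  set M := B₂ * G * B₂ᵀ with hM
  have hGT : Gᵀ = G := Matrix.diagonal_transpose γ
  have hMT : Mᵀ = M := by
    simp [hM, Matrix.transpose_mul, hGT, Matrix.mul_assoc]
  have hMiT : (M⁻¹)ᵀ = M⁻¹ := by
    rw [Matrix.transpose_nonsing_inv, hMT]
  have hMinv : M⁻¹ * M = 1 := Matrix.nonsing_inv_mul M hinv
  have key : (1 - (G * B₂ᵀ * M⁻¹) * B₂) * G *
      (1 - (G * B₂ᵀ * M⁻¹) * B₂)ᵀ = G - G * B₂ᵀ * M⁻¹ * (B₂ * G) := by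
    have ht : (1 - (G * B₂ᵀ * M⁻¹) * B₂)ᵀ = 1 - B₂ᵀ * (M⁻¹ * (B₂ * G)) := by
      simp [Matrix.transpose_sub, Matrix.transpose_mul, hGT, hMiT, Matrix.mul_assoc]
    rw [ht]
    simp only [Matrix.sub_mul, Matrix.mul_sub, Matrix.one_mul, Matrix.mul_one]
    have hcanc : G * B₂ᵀ * M⁻¹ * B₂ * G * (B₂ᵀ * (M⁻¹ * (B₂ * G)))
        = G * (B₂ᵀ * (M⁻¹ * (B₂ * G))) := by
      calc G * B₂ᵀ * M⁻¹ * B₂ * G * (B₂ᵀ * (M⁻¹ * (B₂ * G)))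
          = G * B₂ᵀ * (M⁻¹ * (B₂ * G * B₂ᵀ * M⁻¹)) * (B₂ * G) := by
            simp only [Matrix.mul_assoc]
        _ = G * B₂ᵀ * (M⁻¹ * (M * M⁻¹)) * (B₂ * G) := by rw [← hM]
        _ = G * B₂ᵀ * M⁻¹ * (B₂ * G) := by
            rw [← Matrix.mul_assoc M⁻¹ M M⁻¹, hMinv, Matrix.one_mul]
        _ = G * (B₂ᵀ * (M⁻¹ * (B₂ * G))) := by simp only [Matrix.mul_assoc]
    rw [hcanc]
    abel_nf
    simp only [Matrix.mul_assoc]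
  calc B₁ * G * B₁ᵀ - B₁ * G * B₂ᵀ * M⁻¹ * (B₂ * G * B₁ᵀ)
      = B₁ * ((G - G * B₂ᵀ * M⁻¹ * (B₂ * G)) * B₁ᵀ) := by
        rw [Matrix.sub_mul, Matrix.mul_sub]
        simp only [Matrix.mul_assoc]
    _ = B₁ * ((1 - (G * B₂ᵀ * M⁻¹) * B₂) * G *
        (1 - (G * B₂ᵀ * M⁻¹) * B₂)ᵀ * B₁ᵀ) := by rw [key]
    _ = (B₁ * (1 - (G * B₂ᵀ * M⁻¹) * B₂)) * G *
        (B₁ * (1 - (G * B₂ᵀ * M⁻¹) * B₂))ᵀ := by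
        rw [Matrix.transpose_mul]
        simp only [Matrix.mul_assoc]
end

section
/- If the stacked matrix B = col(B₁, B₂) has zero column sums, i.e. B₁ᵀ𝟙_{n₁} + B₂ᵀ𝟙_{n₂} = 0 (where 𝟙 denotes the all-ones vector), then the projected incidence matrix satisfies B_Sᵀ 𝟙_{n₁} = 0. -/
open Matrix

theorem projected_incidence_zero_row_sums
    {n₁ n₂ m : ℕ} (hn₁ : 0 < n₁) (hn₂ : 0 < n₂) (hm : 0 < m)
    (B₁ : Matrix (Fin n₁) (Fin m) ℝ) (B₂ : Matrix (Fin n₂) (Fin m) ℝ)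
    (γ : Fin m → ℝ) (hγ : ∀ k, 0 < γ k)
    (hrank : B₂.rank = n₂)
    (hinv : IsUnit (B₂ * diagonal γ * B₂ᵀ).det)
    (hcolsum : B₁ᵀ *ᵥ (fun _ => (1 : ℝ)) + B₂ᵀ *ᵥ (fun _ => (1 : ℝ)) = 0) :
    (B₁ * (1 - (diagonal γ * B₂ᵀ * (B₂ * diagonal γ * B₂ᵀ)⁻¹) * B₂))ᵀ *ᵥ
      (fun _ => (1 : ℝ)) = 0 := by
  set P : Matrix (Fin m) (Fin n₂) ℝ :=
    diagonal γ * B₂ᵀ * (B₂ * diagonal γ * B₂ᵀ)⁻¹ with hP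
  have hB₂P : B₂ * P = 1 := by
    rw [hP, ← Matrix.mul_assoc, ← Matrix.mul_assoc,
      Matrix.mul_nonsing_inv _ hinv]
  have hkey : B₂ * (1 - P * B₂) = 0 := by
    rw [Matrix.mul_sub, Matrix.mul_one, ← Matrix.mul_assoc, hB₂P,
      Matrix.one_mul, sub_self]
  have h1 : B₁ᵀ *ᵥ (fun _ => (1 : ℝ)) = -(B₂ᵀ *ᵥ (fun _ => (1 : ℝ))) := by
    linear_combination (norm := module) hcolsum
  calc (B₁ * (1 - P * B₂))ᵀ *ᵥ (fun _ => (1 : ℝ))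
      = (1 - P * B₂)ᵀ *ᵥ (B₁ᵀ *ᵥ (fun _ => (1 : ℝ))) := by
        rw [Matrix.transpose_mul, ← Matrix.mulVec_mulVec]
    _ = -((1 - P * B₂)ᵀ *ᵥ (B₂ᵀ *ᵥ (fun _ => (1 : ℝ)))) := by
        rw [h1, Matrix.mulVec_neg]
    _ = -((B₂ * (1 - P * B₂))ᵀ *ᵥ (fun _ => (1 : ℝ))) := by
        rw [Matrix.transpose_mul, ← Matrix.mulVec_mulVec]
    _ = 0 := by rw [hkey, Matrix.transpose_zero, Matrix.zero_mulVec, neg_zero]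
end

section
/- Suppose the stacked matrix B = col(B₁, B₂) ∈ ℝ^{(n₁+n₂)×m} satisfies ker Bᵀ = span{𝟙_{n₁+n₂}} (i.e., Bᵀx = 0 if and only if x is a scalar multiple of the all-ones vector; this holds when B is the incidence matrix of a connected graph). Then the projected incidence matrix satisfies ker B_Sᵀ = span{𝟙_{n₁}}, i.e., B_Sᵀ y = 0 if and only if y is a scalar multiple of the all-ones vector in ℝ^{n₁}. -/
open Matrix

theorem projected_incidence_kernel
    {n₁ n₂ m : ℕ} (hn₁ : 0 < n₁) (hn₂ : 0 < n₂) (hm : 0 < m)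
    (B₁ : Matrix (Fin n₁) (Fin m) ℝ) (B₂ : Matrix (Fin n₂) (Fin m) ℝ)
    (γ : Fin m → ℝ) (hγ : ∀ k, 0 < γ k)
    (hrank : B₂.rank = n₂)
    (hinv : IsUnit (B₂ * diagonal γ * B₂ᵀ).det)
    (hker : ∀ x : Fin n₁ ⊕ Fin n₂ → ℝ,
      (Matrix.fromRows B₁ B₂)ᵀ *ᵥ x = 0 ↔ ∃ c : ℝ, x = fun _ => c) :
    ∀ y : Fin n₁ → ℝ,
      (B₁ * (1 - (diagonal γ * B₂ᵀ * (B₂ * diagonal γ * B₂ᵀ)⁻¹) * B₂))ᵀ *ᵥ y = 0 ↔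
        ∃ c : ℝ, y = fun _ => c := by
  intro y
  set A : Matrix (Fin m) (Fin n₂) ℝ :=
    diagonal γ * B₂ᵀ * (B₂ * diagonal γ * B₂ᵀ)⁻¹ with hA
  have hBA : B₂ * A = 1 := by
    rw [hA, ← Matrix.mul_assoc, ← Matrix.mul_assoc, Matrix.mul_nonsing_inv _ hinv]
  rw [Matrix.mulVec_transpose]
  constructor
  · intro h
    set u : Fin m → ℝ := y ᵥ* B₁ with hu
    have h' : u - (u ᵥ* A) ᵥ* B₂ = 0 := by
      have := h
      rw [← Matrix.vecMul_vecMul, ← hu, Matrix.vecMul_sub, Matrix.vecMul_one,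
        ← Matrix.vecMul_vecMul] at this
      exact this
    have hx : (Matrix.fromRows B₁ B₂)ᵀ *ᵥ (Sum.elim y (-(u ᵥ* A))) = 0 := by
      rw [Matrix.mulVec_transpose, Matrix.sumElim_vecMul_fromRows, Matrix.neg_vecMul]
      rw [← hu]
      rw [sub_eq_zero] at h'
      rw [← h']
      simp
    obtain ⟨c, hc⟩ := (hker _).mp hx
    refine ⟨c, funext fun i => ?_⟩
    have := congrFun hc (Sum.inl i)
    simpa using this
  · rintro ⟨c, rfl⟩
    have hx : (Matrix.fromRows B₁ B₂)ᵀ *ᵥ (fun _ => c) = 0 :=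
      (hker _).mpr ⟨c, rfl⟩
    have hx' : (fun _ => c : Fin n₁ → ℝ) ᵥ* B₁ + (fun _ => c : Fin n₂ → ℝ) ᵥ* B₂ = 0 := by
      have : (Sum.elim (fun _ => c) (fun _ => c) : Fin n₁ ⊕ Fin n₂ → ℝ) = fun _ => c := by
        ext (_ | _) <;> rfl
      rw [Matrix.mulVec_transpose, ← this, Matrix.sumElim_vecMul_fromRows] at hx
      exact hx
    have h1 : (fun _ => c : Fin n₁ → ℝ) ᵥ* B₁ = -((fun _ => c : Fin n₂ → ℝ) ᵥ* B₂) := by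
      linear_combination (norm := module) hx'
    rw [← Matrix.vecMul_vecMul, h1, Matrix.neg_vecMul, Matrix.vecMul_vecMul,
      Matrix.mul_sub, Matrix.mul_one, ← Matrix.mul_assoc, hBA, Matrix.one_mul, sub_self]
    simp
end

section
/- Suppose θ_G : ℝ → ℝ^{n_g} is twice differentiable and θ_L : ℝ → ℝ^{n_ℓ} satisfies, together with θ_G, the linear differential-algebraic system M θ_G'' = −A θ_G' − B_G Γ B_Gᵀ θ_G − B_G Γ B_Lᵀ θ_L + u and 0 = −B_L Γ B_Gᵀ θ_G − B_L Γ B_Lᵀ θ_L + p* for all t, where u ∈ ℝ^{n_g} and p* ∈ ℝ^{n_ℓ} are constant vectors. Then θ_G satisfies the reduced ordinary differential equation M θ_G'' = −A θ_G' − L_S θ_G + u − p̂, where L_S = B_G Γ B_Gᵀ − B_G Γ B_Lᵀ (B_L Γ B_Lᵀ)⁻¹ B_L Γ B_Gᵀ and p̂ = B_G Γ B_Lᵀ (B_L Γ B_Lᵀ)⁻¹ p*. -/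
open Matrix

theorem linear_DAE_to_reduced_ODE
    {ng nl m : ℕ} (hng : 0 < ng) (hnl : 0 < nl) (hm : 0 < m)
    (BG : Matrix (Fin ng) (Fin m) ℝ) (BL : Matrix (Fin nl) (Fin m) ℝ)
    (γ : Fin m → ℝ) (hγ : ∀ k, 0 < γ k)
    (hrank : BL.rank = nl)
    (hinv : IsUnit (BL * diagonal γ * BLᵀ).det)
    (Md Ad : Fin ng → ℝ) (hM : ∀ i, 0 < Md i) (hA : ∀ i, 0 < Ad i)
    (u : Fin ng → ℝ) (pstar : Fin nl → ℝ)
    (θG : ℝ → Fin ng → ℝ) (θL : ℝ → Fin nl → ℝ)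
    (hθG : Differentiable ℝ θG) (hθG' : Differentiable ℝ (deriv θG))
    (hswing : ∀ t : ℝ,
      diagonal Md *ᵥ deriv (deriv θG) t =
        -(diagonal Ad *ᵥ deriv θG t) - (BG * diagonal γ * BGᵀ) *ᵥ θG t -
          (BG * diagonal γ * BLᵀ) *ᵥ θL t + u)
    (halg : ∀ t : ℝ,
      (0 : Fin nl → ℝ) =
        -((BL * diagonal γ * BGᵀ) *ᵥ θG t) - (BL * diagonal γ * BLᵀ) *ᵥ θL t + pstar) :
    ∀ t : ℝ,
      diagonal Md *ᵥ deriv (deriv θG) t =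
        -(diagonal Ad *ᵥ deriv θG t) -
          (BG * diagonal γ * BGᵀ -
            BG * diagonal γ * BLᵀ * (BL * diagonal γ * BLᵀ)⁻¹ * (BL * diagonal γ * BGᵀ)) *ᵥ θG t
          + u - (BG * diagonal γ * BLᵀ * (BL * diagonal γ * BLᵀ)⁻¹) *ᵥ pstar := by
  intro t
  have h1 := halg t
  -- solve for θL t
  have hθL : θL t = (BL * diagonal γ * BLᵀ)⁻¹ *ᵥ (pstar - (BL * diagonal γ * BGᵀ) *ᵥ θG t) := by
    have h2 : (BL * diagonal γ * BLᵀ) *ᵥ θL t = pstar - (BL * diagonal γ * BGᵀ) *ᵥ θG t := by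
      have := h1
      funext i
      have := congrFun h1 i
      simp only [Pi.zero_apply, Pi.add_apply, Pi.sub_apply, Pi.neg_apply, Pi.sub_apply] at this ⊢
      linarith
    calc θL t = ((BL * diagonal γ * BLᵀ)⁻¹ * (BL * diagonal γ * BLᵀ)) *ᵥ θL t := by
            rw [Matrix.nonsing_inv_mul _ hinv, Matrix.one_mulVec]
      _ = (BL * diagonal γ * BLᵀ)⁻¹ *ᵥ ((BL * diagonal γ * BLᵀ) *ᵥ θL t) := by
            rw [Matrix.mulVec_mulVec]
      _ = _ := by rw [h2]
  rw [hswing t, hθL]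
  simp only [Matrix.mulVec_sub, Matrix.sub_mulVec, Matrix.mulVec_mulVec, Matrix.mulVec_add]
  rw [← Matrix.mul_assoc]
  abel
end

section
/- Suppose θ_G : ℝ → ℝ^{n_g} is twice differentiable and θ_L : ℝ → ℝ^{n_ℓ} satisfies, together with θ_G, the linear differential-algebraic system M θ_G'' = −A θ_G' − B_G Γ B_Gᵀ θ_G − B_G Γ B_Lᵀ θ_L + u and 0 = −B_L Γ B_Gᵀ θ_G − B_L Γ B_Lᵀ θ_L + p* for all t, where u ∈ ℝ^{n_g} and p* ∈ ℝ^{n_ℓ} are constant vectors. Then the pair (η_S, ω_G) with η_S = B_Sᵀ θ_G and ω_G = θ_G' satisfies the reduced state-space model η_S' = B_Sᵀ ω_G and M ω_G' = −A ω_G − B_S Γ η_S + u − p̂, where p̂ = B_G Γ B_Lᵀ (B_L Γ B_Lᵀ)⁻¹ p*. -/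
open Matrix

theorem linear_DAE_to_new_reduced_model
    {ng nl m : ℕ} (hng : 0 < ng) (hnl : 0 < nl) (hm : 0 < m)
    (BG : Matrix (Fin ng) (Fin m) ℝ) (BL : Matrix (Fin nl) (Fin m) ℝ)
    (γ : Fin m → ℝ) (hγ : ∀ k, 0 < γ k)
    (hrank : BL.rank = nl)
    (hinv : IsUnit (BL * diagonal γ * BLᵀ).det)
    (Md Ad : Fin ng → ℝ) (hM : ∀ i, 0 < Md i) (hA : ∀ i, 0 < Ad i)
    (u : Fin ng → ℝ) (pstar : Fin nl → ℝ)
    (θG : ℝ → Fin ng → ℝ) (θL : ℝ → Fin nl → ℝ)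
    (hθG : Differentiable ℝ θG) (hθG' : Differentiable ℝ (deriv θG))
    (hswing : ∀ t : ℝ,
      diagonal Md *ᵥ deriv (deriv θG) t =
        -(diagonal Ad *ᵥ deriv θG t) - (BG * diagonal γ * BGᵀ) *ᵥ θG t -
          (BG * diagonal γ * BLᵀ) *ᵥ θL t + u)
    (halg : ∀ t : ℝ,
      (0 : Fin nl → ℝ) =
        -((BL * diagonal γ * BGᵀ) *ᵥ θG t) - (BL * diagonal γ * BLᵀ) *ᵥ θL t + pstar) :
    (∀ t : ℝ,
      deriv (fun s =>
        (BG * (1 - (diagonal γ * BLᵀ * (BL * diagonal γ * BLᵀ)⁻¹) * BL))ᵀ *ᵥ θG s) t =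
      (BG * (1 - (diagonal γ * BLᵀ * (BL * diagonal γ * BLᵀ)⁻¹) * BL))ᵀ *ᵥ deriv θG t) ∧
    (∀ t : ℝ,
      diagonal Md *ᵥ deriv (deriv θG) t =
        -(diagonal Ad *ᵥ deriv θG t) -
          ((BG * (1 - (diagonal γ * BLᵀ * (BL * diagonal γ * BLᵀ)⁻¹) * BL)) * diagonal γ) *ᵥ
            ((BG * (1 - (diagonal γ * BLᵀ * (BL * diagonal γ * BLᵀ)⁻¹) * BL))ᵀ *ᵥ θG t)
          + u - (BG * diagonal γ * BLᵀ * (BL * diagonal γ * BLᵀ)⁻¹) *ᵥ pstar) := by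
  set G := diagonal γ with hG
  set X := (BL * G * BLᵀ)⁻¹ with hX
  set S := BG * (1 - (G * BLᵀ * X) * BL) with hS
  have hGt : Gᵀ = G := diagonal_transpose γ
  have hXsymm : Xᵀ = X := by
    rw [hX, transpose_nonsing_inv]
    congr 1
    rw [transpose_mul, transpose_mul, hGt, transpose_transpose, Matrix.mul_assoc]
  have hXinv : X * (BL * G * BLᵀ) = 1 := nonsing_inv_mul _ hinv
  constructor
  · intro t
    exact (((Matrix.mulVecLin Sᵀ).toContinuousLinearMap.hasFDerivAt
      (x := θG t)).comp_hasDerivAt t (hθG t).hasDerivAt).deriv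
  · intro t
    have hkey : S * G * Sᵀ = BG * G * BGᵀ - BG * G * BLᵀ * X * (BL * G * BGᵀ) := by
      have hXinv' : ∀ C : Matrix (Fin nl) (Fin ng) ℝ,
          X * (BL * (G * (BLᵀ * (X * C)))) = X * C := by
        intro C
        calc X * (BL * (G * (BLᵀ * (X * C)))) = (X * (BL * G * BLᵀ)) * (X * C) := by
              simp only [Matrix.mul_assoc]
          _ = X * C := by rw [hXinv, Matrix.one_mul]
      rw [hS]
      simp only [transpose_mul, transpose_sub, transpose_one, hGt, hXsymm, transpose_transpose,
        Matrix.mul_sub, Matrix.sub_mul, Matrix.mul_one, Matrix.one_mul, Matrix.mul_assoc]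
      rw [hXinv']
      abel
    have hL : (BG * G * BLᵀ) *ᵥ θL t =
        (BG * G * BLᵀ * X) *ᵥ (pstar - (BL * G * BGᵀ) *ᵥ θG t) := by
      have h1 : (BL * G * BLᵀ) *ᵥ θL t = pstar - (BL * G * BGᵀ) *ᵥ θG t := by
        have := halg t
        have h2 := congrArg (fun v => v + (BL * G * BLᵀ) *ᵥ θL t +
          (BL * G * BGᵀ) *ᵥ θG t - pstar + pstar - pstar) this
        funext i
        have := congrFun (halg t) i
        simp only [Pi.zero_apply, Pi.add_apply, Pi.sub_apply, Pi.neg_apply] at this ⊢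
        linarith
      have h3 : BG * G * BLᵀ * X * (BL * G * BLᵀ) = BG * G * BLᵀ := by
        calc BG * G * BLᵀ * X * (BL * G * BLᵀ) = (BG * G * BLᵀ) * (X * (BL * G * BLᵀ)) := by
              simp only [Matrix.mul_assoc]
          _ = BG * G * BLᵀ := by rw [hXinv, Matrix.mul_one]
      rw [← h1, mulVec_mulVec, h3]
    rw [hswing t, mulVec_mulVec, hkey, sub_mulVec, hL, mulVec_sub, mulVec_mulVec]
    abel
end

section
/- (DAE to reduced ODE.) Let u ∈ ℝ^{n_g} be constant and p* ∈ ℝ^{n_ℓ} be constant. Suppose on the interval I = [0,T) the functions θ = col(θ_G, θ_L) : I → ℝ^{n_g+n_ℓ} and ω_G = θ_G' satisfy the nonlinear differential-algebraic system θ_G' = ω_G, M ω_G' = −A ω_G − B_G Γ sin(Bᵀθ) + u, and 0 = −B_L Γ sin(Bᵀθ) + p*, with θ_G, θ_L differentiable and Bᵀθ(t) ∈ Ω = (−π/2, π/2)^m for all t ∈ I. Then the pair (η, ω_G) with η = Bᵀθ satisfies on I the reduced ordinary differential equations η' = B_S(η)ᵀ ω_G and M ω_G' = −A ω_G − B_G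 Γ sin(η) + u. -/
open Matrix

/-- The state-dependent projected incidence matrix `B_S(η)`, built from the
state-dependent weight matrix `Γ'(η) = Γ diag(cos η_k)`. -/
noncomputable def projIncidence {ng nl m : ℕ}
    (BG : Matrix (Fin ng) (Fin m) ℝ) (BL : Matrix (Fin nl) (Fin m) ℝ)
    (γ : Fin m → ℝ) (η : Fin m → ℝ) : Matrix (Fin ng) (Fin m) ℝ :=
  let Γ' : Matrix (Fin m) (Fin m) ℝ := diagonal fun k => γ k * Real.cos (η k)
  BG * (1 - (Γ' * BLᵀ * (BL * Γ' * BLᵀ)⁻¹) * BL)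

lemma mulVec_hasDerivAt {n p : ℕ} (A : Matrix (Fin n) (Fin p) ℝ)
    {f : ℝ → Fin p → ℝ} {f' : Fin p → ℝ} {t : ℝ} (hf : HasDerivAt f f' t) :
    HasDerivAt (fun s => A *ᵥ f s) (A *ᵥ f') t := by
  rw [hasDerivAt_pi] at hf ⊢
  intro i
  simpa [Matrix.mulVec, dotProduct] using
    HasDerivAt.fun_sum (fun j (_ : j ∈ Finset.univ) => ((hf j).const_mul (A i j)))

lemma sin_pi_hasDerivAt {n : ℕ} {f : ℝ → Fin n → ℝ} {f' : Fin n → ℝ} {t : ℝ}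
    (hf : HasDerivAt f f' t) :
    HasDerivAt (fun s => fun k => Real.sin (f s k))
      (fun k => Real.cos (f t k) * f' k) t := by
  rw [hasDerivAt_pi] at hf ⊢
  intro k
  exact (Real.hasDerivAt_sin (f t k)).comp t (hf k)

lemma deriv_zero_of_const_on {n : ℕ} {f : ℝ → Fin n → ℝ} {d : Fin n → ℝ} {t T : ℝ}
    (ht : t ∈ Set.Ico (0 : ℝ) T) (hf : HasDerivAt f d t) (c : Fin n → ℝ)
    (hc : ∀ s ∈ Set.Ico (0 : ℝ) T, f s = c) : d = 0 := by
  have h1 : HasDerivWithinAt f d (Set.Ici t) t := hf.hasDerivWithinAt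
  have hmem : Set.Ico t T ∈ nhdsWithin t (Set.Ici t) :=
    Ico_mem_nhdsGE_of_mem ⟨le_refl t, ht.2⟩
  have h2 : HasDerivWithinAt (fun _ => c) d (Set.Ici t) t :=
    h1.congr_of_eventuallyEq
      (Filter.eventuallyEq_of_mem hmem fun s hs => (hc s ⟨le_trans ht.1 hs.1, hs.2⟩).symm)
      (hc t ht).symm
  exact (uniqueDiffOn_Ici t t Set.self_mem_Ici).eq_deriv _ h2 (hasDerivWithinAt_const t _ c)

lemma posDef_sandwich {nl m : ℕ} (BL : Matrix (Fin nl) (Fin m) ℝ)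
    (hrank : BL.rank = nl) (d : Fin m → ℝ) (hd : ∀ k, 0 < d k) :
    (BL * diagonal d * BLᵀ).PosDef := by
  have hinj : Function.Injective (BLᵀ.mulVecLin) := by
    rw [← LinearMap.ker_eq_bot]
    have hr : BLᵀ.rank = nl := by rw [Matrix.rank_transpose]; exact hrank
    have h2 := BLᵀ.mulVecLin.finrank_range_add_finrank_ker
    rw [show Module.finrank ℝ (LinearMap.range BLᵀ.mulVecLin) = nl from hr] at h2
    rw [show Module.finrank ℝ (Fin nl → ℝ) = nl by simp] at h2
    exact Submodule.finrank_eq_zero.mp (by omega)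
  refine Matrix.PosDef.of_dotProduct_mulVec_pos ?_ ?_
  · unfold Matrix.IsHermitian
    rw [conjTranspose_eq_transpose_of_trivial]
    simp [Matrix.transpose_mul, Matrix.mul_assoc, Matrix.diagonal_transpose]
  · intro x hx
    have hy : BLᵀ *ᵥ x ≠ 0 := fun h => hx (hinj
      (by rw [Matrix.mulVecLin_apply, Matrix.mulVecLin_apply, h, Matrix.mulVec_zero]))
    have key : star x ⬝ᵥ (BL * diagonal d * BLᵀ) *ᵥ x
        = ∑ k, (BLᵀ *ᵥ x) k * (d k * (BLᵀ *ᵥ x) k) := by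
      rw [star_trivial, ← Matrix.mulVec_mulVec, ← Matrix.mulVec_mulVec,
        Matrix.dotProduct_mulVec, ← Matrix.mulVec_transpose]
      simp [dotProduct, Matrix.mulVec_diagonal]
    rw [key]
    obtain ⟨k₀, hk₀⟩ := Function.ne_iff.mp hy
    apply Finset.sum_pos' (fun k _ => by nlinarith [sq_nonneg ((BLᵀ *ᵥ x) k), hd k])
    refine ⟨k₀, Finset.mem_univ _, ?_⟩
    have hk : (BLᵀ *ᵥ x) k₀ ≠ 0 := by simpa using hk₀
    have := mul_pos (hd k₀) (mul_self_pos.mpr hk)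
    nlinarith

theorem nonlinear_DAE_to_reduced_ODE
    {ng nl m : ℕ} (hng : 0 < ng) (hnl : 0 < nl) (hm : 0 < m)
    (BG : Matrix (Fin ng) (Fin m) ℝ) (BL : Matrix (Fin nl) (Fin m) ℝ)
    (γ : Fin m → ℝ) (hγ : ∀ k, 0 < γ k)
    (hrank : BL.rank = nl)
    (Md Ad : Fin ng → ℝ) (hM : ∀ i, 0 < Md i) (hA : ∀ i, 0 < Ad i)
    (u : Fin ng → ℝ) (pstar : Fin nl → ℝ)
    (T : ℝ) (hT : 0 < T)
    (θG : ℝ → Fin ng → ℝ) (θL : ℝ → Fin nl → ℝ)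
    (ωG ωG' : ℝ → Fin ng → ℝ) (θL' : ℝ → Fin nl → ℝ)
    (hθG : ∀ t ∈ Set.Ico (0 : ℝ) T, HasDerivAt θG (ωG t) t)
    (hθL : ∀ t ∈ Set.Ico (0 : ℝ) T, HasDerivAt θL (θL' t) t)
    (hωG : ∀ t ∈ Set.Ico (0 : ℝ) T, HasDerivAt ωG (ωG' t) t)
    (hswing : ∀ t ∈ Set.Ico (0 : ℝ) T,
      diagonal Md *ᵥ ωG' t =
        -(diagonal Ad *ᵥ ωG t) -
          (BG * diagonal γ) *ᵥ (fun k => Real.sin ((BGᵀ *ᵥ θG t + BLᵀ *ᵥ θL t) k)) + u)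
    (halg : ∀ t ∈ Set.Ico (0 : ℝ) T,
      (0 : Fin nl → ℝ) =
        -((BL * diagonal γ) *ᵥ (fun k => Real.sin ((BGᵀ *ᵥ θG t + BLᵀ *ᵥ θL t) k))) + pstar)
    (hΩ : ∀ t ∈ Set.Ico (0 : ℝ) T, ∀ k,
      (BGᵀ *ᵥ θG t + BLᵀ *ᵥ θL t) k ∈ Set.Ioo (-(Real.pi / 2)) (Real.pi / 2)) :
    (∀ t ∈ Set.Ico (0 : ℝ) T,
      HasDerivAt (fun s => BGᵀ *ᵥ θG s + BLᵀ *ᵥ θL s)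
        ((projIncidence BG BL γ (BGᵀ *ᵥ θG t + BLᵀ *ᵥ θL t))ᵀ *ᵥ ωG t) t) ∧
    (∀ t ∈ Set.Ico (0 : ℝ) T,
      diagonal Md *ᵥ ωG' t =
        -(diagonal Ad *ᵥ ωG t) -
          (BG * diagonal γ) *ᵥ (fun k => Real.sin ((BGᵀ *ᵥ θG t + BLᵀ *ᵥ θL t) k)) + u) := by
  refine ⟨?_, hswing⟩
  intro t ht
  set η : ℝ → Fin m → ℝ := fun s => BGᵀ *ᵥ θG s + BLᵀ *ᵥ θL s with hη_def
  set v : Fin m → ℝ := BGᵀ *ᵥ ωG t + BLᵀ *ᵥ θL' t with hv_def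
  set d : Fin m → ℝ := fun k => γ k * Real.cos (η t k) with hd_def
  have hd : ∀ k, 0 < d k := fun k =>
    mul_pos (hγ k) (Real.cos_pos_of_mem_Ioo (hΩ t ht k))
  set D : Matrix (Fin m) (Fin m) ℝ := diagonal d with hD_def
  set S : Matrix (Fin nl) (Fin nl) ℝ := BL * D * BLᵀ with hS_def
  have hPD : S.PosDef := posDef_sandwich BL hrank d hd
  have hdet : IsUnit S.det := hPD.det_pos.ne'.isUnit
  have hSinv : S⁻¹ * S = 1 := Matrix.nonsing_inv_mul _ hdet
  have hSsymm : Sᵀ = S := by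
    have := hPD.1
    rwa [Matrix.IsHermitian, conjTranspose_eq_transpose_of_trivial] at this
  -- derivative of η
  have hv : HasDerivAt η v t :=
    (mulVec_hasDerivAt BGᵀ (hθG t ht)).add (mulVec_hasDerivAt BLᵀ (hθL t ht))
  -- derivative of the algebraic constraint
  have hF : HasDerivAt (fun s => (BL * diagonal γ) *ᵥ fun k => Real.sin (η s k))
      ((BL * diagonal γ) *ᵥ fun k => Real.cos (η t k) * v k) t :=
    mulVec_hasDerivAt _ (sin_pi_hasDerivAt hv)
  have hzero : ((BL * diagonal γ) *ᵥ fun k => Real.cos (η t k) * v k) = 0 := by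
    refine deriv_zero_of_const_on ht hF pstar (fun s hs => ?_)
    have h := (halg s hs).symm
    rwa [neg_add_eq_zero] at h
  -- rewrite the zero condition in matrix form
  have hmid : ((diagonal γ) *ᵥ fun k => Real.cos (η t k) * v k) = D *ᵥ v := by
    funext k
    rw [hD_def, Matrix.mulVec_diagonal, Matrix.mulVec_diagonal, hd_def]
    ring
  have hz : BL *ᵥ (D *ᵥ v) = 0 := by
    rw [← hmid, Matrix.mulVec_mulVec]; exact hzero
  have hzero2 : S *ᵥ θL' t + (BL * D * BGᵀ) *ᵥ ωG t = 0 := by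
    rw [← hz, hv_def, Matrix.mulVec_add, Matrix.mulVec_add]
    simp only [Matrix.mulVec_mulVec, hS_def, Matrix.mul_assoc]
    exact add_comm _ _
  have hθL'eq : θL' t = -((S⁻¹ * (BL * D * BGᵀ)) *ᵥ ωG t) := by
    have h1 : S⁻¹ *ᵥ (S *ᵥ θL' t) = θL' t := by
      rw [Matrix.mulVec_mulVec, hSinv, Matrix.one_mulVec]
    have h2 : S *ᵥ θL' t = -((BL * D * BGᵀ) *ᵥ ωG t) := by
      rw [eq_neg_iff_add_eq_zero]; exact hzero2
    rw [← h1, h2, Matrix.mulVec_neg, Matrix.mulVec_mulVec]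
  -- the derivative identity
  have hfinal : (projIncidence BG BL γ (η t))ᵀ *ᵥ ωG t = v := by
    rw [hv_def, hθL'eq]
    show (BG * (1 - (D * BLᵀ * S⁻¹) * BL))ᵀ *ᵥ ωG t = _
    rw [Matrix.transpose_mul, Matrix.transpose_sub, Matrix.transpose_one,
      Matrix.transpose_mul, Matrix.transpose_mul, Matrix.transpose_mul,
      Matrix.transpose_nonsing_inv, hSsymm, Matrix.diagonal_transpose,
      Matrix.sub_mul, Matrix.one_mul]
    rw [Matrix.sub_mulVec, Matrix.mulVec_neg]
    congr 1
    simp only [Matrix.transpose_transpose, Matrix.mulVec_mulVec, Matrix.mul_assoc, hD_def]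
  rw [← hfinal] at hv
  exact hv
end

section
/- (Reduced ODE to DAE.) Let u ∈ ℝ^{n_g} and p* ∈ ℝ^{n_ℓ} be constant. Suppose (η, ω_G) : I → ℝ^m × ℝ^{n_g}, with I = [0,T), is differentiable and satisfies the reduced ordinary differential equations η' = B_S(η)ᵀ ω_G and M ω_G' = −A ω_G − B_G Γ sin(η) + u on I, with η(t) ∈ Ω for all t ∈ I, and assume the compatible initial condition η(0) ∈ im Bᵀ and 0 = p* − B_L Γ sin(η(0)). Then there exists a differentiable θ = col(θ_G, θ_L) : I → ℝ^{n_g+n_ℓ} with Bᵀθ(t) = η(t) such that (θ_G, θ_L, ω_G) satisfies the differential-algebraic system θ_G' = ω_G, M ω_G' = −A ω_G − B_G Γ sin(Bᵀθ) + u, and 0 = −B_L Γ sin(Bᵀθ) + p* on I. -/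
open Matrix

lemma aux_hasDerivAt_mulVec {n m : ℕ} (M : Matrix (Fin n) (Fin m) ℝ)
    {f : ℝ → Fin m → ℝ} {f' : Fin m → ℝ} {t : ℝ} (h : HasDerivAt f f' t) :
    HasDerivAt (fun s => M *ᵥ f s) (M *ᵥ f') t := by
  rw [hasDerivAt_pi]
  intro i
  have hk : ∀ k : Fin m, HasDerivAt (fun s => f s k) (f' k) t := hasDerivAt_pi.1 h
  simpa [Matrix.mulVec, dotProduct] using
    HasDerivAt.fun_sum (u := Finset.univ) (A := fun k s => M i k * f s k)
      (A' := fun k => M i k * f' k) (fun k _ => (hk k).const_mul (M i k))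

lemma aux_inj {nl m : ℕ} (BL : Matrix (Fin nl) (Fin m) ℝ) (h : BL.rank = nl) :
    ∀ v : Fin nl → ℝ, BLᵀ *ᵥ v = 0 → v = 0 := by
  intro v hv
  have hrk : BLᵀ.rank = nl := by rw [Matrix.rank_transpose, h]
  have hrk' : Module.finrank ℝ (LinearMap.range BLᵀ.mulVecLin) = nl := hrk
  have h1 := LinearMap.finrank_range_add_finrank_ker (BLᵀ.mulVecLin)
  have hfin : Module.finrank ℝ (Fin nl → ℝ) = nl := by simp
  have hker0 : Module.finrank ℝ (LinearMap.ker BLᵀ.mulVecLin) = 0 := by omega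
  have hker : LinearMap.ker BLᵀ.mulVecLin = ⊥ := Submodule.finrank_eq_zero.mp hker0
  have hv' : v ∈ LinearMap.ker BLᵀ.mulVecLin := by
    rw [LinearMap.mem_ker, Matrix.mulVecLin_apply]; exact hv
  rw [hker, Submodule.mem_bot] at hv'
  exact hv'

lemma aux_isUnit {nl m : ℕ} (BL : Matrix (Fin nl) (Fin m) ℝ)
    (hinj : ∀ v : Fin nl → ℝ, BLᵀ *ᵥ v = 0 → v = 0)
    (d : Fin m → ℝ) (hd : ∀ k, 0 < d k) :
    IsUnit (BL * diagonal d * BLᵀ).det := by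
  rw [isUnit_iff_ne_zero]
  intro hdet
  obtain ⟨v, hv0, hv⟩ := (Matrix.exists_mulVec_eq_zero_iff).2 hdet
  apply hv0
  apply hinj
  have hq : v ⬝ᵥ ((BL * diagonal d * BLᵀ) *ᵥ v) = 0 := by rw [hv]; simp
  have hrw : v ⬝ᵥ ((BL * diagonal d * BLᵀ) *ᵥ v)
      = ∑ k, d k * (BLᵀ *ᵥ v) k ^ 2 := by
    rw [← Matrix.mulVec_mulVec, ← Matrix.mulVec_mulVec, Matrix.dotProduct_mulVec,
      ← Matrix.mulVec_transpose]
    simp only [dotProduct, Matrix.mulVec_diagonal]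
    exact Finset.sum_congr rfl fun k _ => by ring
  rw [hrw] at hq
  have hz : ∀ k ∈ Finset.univ, d k * (BLᵀ *ᵥ v) k ^ 2 = 0 :=
    (Finset.sum_eq_zero_iff_of_nonneg fun k _ =>
      mul_nonneg (hd k).le (sq_nonneg _)).1 hq
  funext k
  have := hz k (Finset.mem_univ k)
  have h2 : (BLᵀ *ᵥ v) k ^ 2 = 0 := by
    rcases mul_eq_zero.1 this with h | h
    · exact absurd h (hd k).ne'
    · exact h
  simpa using pow_eq_zero_iff (n := 2) (by norm_num) |>.1 h2

lemma aux_const {E : Type*} [NormedAddCommGroup E] [NormedSpace ℝ E] {T : ℝ}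
    {f : ℝ → E} (hf : ∀ t ∈ Set.Ico (0:ℝ) T, HasDerivAt f 0 t) :
    ∀ t ∈ Set.Ico (0:ℝ) T, f t = f 0 := by
  intro t ht
  refine constant_of_has_deriv_right_zero (a := 0) (b := t) ?_ ?_ t ⟨ht.1, le_refl t⟩
  · intro s hs
    exact ((hf s ⟨hs.1, lt_of_le_of_lt hs.2 ht.2⟩).continuousAt).continuousWithinAt
  · intro s hs
    exact ((hf s ⟨hs.1, lt_of_lt_of_le hs.2 (le_of_lt ht.2)⟩).hasDerivWithinAt)


lemma aux_key1 {ng nl m : ℕ}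
    (BG : Matrix (Fin ng) (Fin m) ℝ) (BL : Matrix (Fin nl) (Fin m) ℝ)
    (W : Matrix (Fin m) (Fin nl) ℝ) (hN : IsUnit (BL * BLᵀ).det) :
    (1 - BLᵀ * (BL * BLᵀ)⁻¹ * BL) * ((BG * (1 - W * BL))ᵀ - BGᵀ) = 0 := by
  have h1 : (BL * BLᵀ)⁻¹ * (BL * BLᵀ) = 1 := Matrix.nonsing_inv_mul _ hN
  have hPB : (1 - BLᵀ * (BL * BLᵀ)⁻¹ * BL) * BLᵀ = 0 := by
    rw [Matrix.sub_mul, Matrix.one_mul, Matrix.mul_assoc (BLᵀ * (BL * BLᵀ)⁻¹) BL BLᵀ,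
      Matrix.mul_assoc BLᵀ (BL * BLᵀ)⁻¹ (BL * BLᵀ), h1, Matrix.mul_one, sub_self]
  have hT : (BG * (1 - W * BL))ᵀ - BGᵀ = -(BLᵀ * (Wᵀ * BGᵀ)) := by
    rw [Matrix.transpose_mul, Matrix.transpose_sub, Matrix.transpose_one,
      Matrix.transpose_mul, Matrix.sub_mul, Matrix.one_mul, sub_sub_cancel_left,
      Matrix.mul_assoc]
  rw [hT, Matrix.mul_neg, ← Matrix.mul_assoc, hPB, Matrix.zero_mul, neg_zero]

lemma aux_key2 {ng nl m : ℕ}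
    (BG : Matrix (Fin ng) (Fin m) ℝ) (BL : Matrix (Fin nl) (Fin m) ℝ)
    (D : Matrix (Fin m) (Fin m) ℝ) (hDt : Dᵀ = D)
    (hK : IsUnit (BL * D * BLᵀ).det) :
    BL * D * (BG * (1 - (D * BLᵀ * (BL * D * BLᵀ)⁻¹) * BL))ᵀ = 0 := by
  have hKT : (BL * D * BLᵀ)ᵀ = BL * D * BLᵀ := by
    rw [Matrix.transpose_mul, Matrix.transpose_mul, Matrix.transpose_transpose, hDt,
      Matrix.mul_assoc]
  have hWT : (D * BLᵀ * (BL * D * BLᵀ)⁻¹)ᵀ = (BL * D * BLᵀ)⁻¹ * (BL * D) := by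
    rw [Matrix.transpose_mul, Matrix.transpose_nonsing_inv, hKT,
      Matrix.transpose_mul, Matrix.transpose_transpose, hDt]
  have hKK : (BL * D * BLᵀ) * (BL * D * BLᵀ)⁻¹ = 1 := Matrix.mul_nonsing_inv _ hK
  rw [Matrix.transpose_mul, Matrix.transpose_sub, Matrix.transpose_one,
    Matrix.transpose_mul, hWT, ← Matrix.mul_assoc, Matrix.mul_sub, Matrix.mul_one,
    ← Matrix.mul_assoc (BL * D) BLᵀ ((BL * D * BLᵀ)⁻¹ * (BL * D)),
    ← Matrix.mul_assoc (BL * D * BLᵀ) ((BL * D * BLᵀ)⁻¹) (BL * D), hKK,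
    Matrix.one_mul, sub_self, Matrix.zero_mul]
theorem reduced_ODE_to_nonlinear_DAE
    {ng nl m : ℕ} (hng : 0 < ng) (hnl : 0 < nl) (hm : 0 < m)
    (BG : Matrix (Fin ng) (Fin m) ℝ) (BL : Matrix (Fin nl) (Fin m) ℝ)
    (γ : Fin m → ℝ) (hγ : ∀ k, 0 < γ k)
    (hrank : BL.rank = nl)
    (Md Ad : Fin ng → ℝ) (hM : ∀ i, 0 < Md i) (hA : ∀ i, 0 < Ad i)
    (u : Fin ng → ℝ) (pstar : Fin nl → ℝ)
    (T : ℝ) (hT : 0 < T)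
    (η : ℝ → Fin m → ℝ) (ωG ωG' : ℝ → Fin ng → ℝ)
    (hη : ∀ t ∈ Set.Ico (0 : ℝ) T,
      HasDerivAt η ((projIncidence BG BL γ (η t))ᵀ *ᵥ ωG t) t)
    (hωG : ∀ t ∈ Set.Ico (0 : ℝ) T, HasDerivAt ωG (ωG' t) t)
    (hswing : ∀ t ∈ Set.Ico (0 : ℝ) T,
      diagonal Md *ᵥ ωG' t =
        -(diagonal Ad *ᵥ ωG t) -
          (BG * diagonal γ) *ᵥ (fun k => Real.sin (η t k)) + u)
    (hΩ : ∀ t ∈ Set.Ico (0 : ℝ) T, ∀ k,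
      η t k ∈ Set.Ioo (-(Real.pi / 2)) (Real.pi / 2))
    (hinit : ∃ x : Fin ng ⊕ Fin nl → ℝ, η 0 = (Matrix.fromRows BG BL)ᵀ *ᵥ x)
    (hcompat : (0 : Fin nl → ℝ) =
      pstar - (BL * diagonal γ) *ᵥ (fun k => Real.sin (η 0 k))) :
    ∃ θG : ℝ → Fin ng → ℝ, ∃ θL : ℝ → Fin nl → ℝ, ∃ θL' : ℝ → Fin nl → ℝ,
      (∀ t ∈ Set.Ico (0 : ℝ) T, BGᵀ *ᵥ θG t + BLᵀ *ᵥ θL t = η t) ∧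
      (∀ t ∈ Set.Ico (0 : ℝ) T, HasDerivAt θG (ωG t) t) ∧
      (∀ t ∈ Set.Ico (0 : ℝ) T, HasDerivAt θL (θL' t) t) ∧
      (∀ t ∈ Set.Ico (0 : ℝ) T,
        diagonal Md *ᵥ ωG' t =
          -(diagonal Ad *ᵥ ωG t) -
            (BG * diagonal γ) *ᵥ (fun k => Real.sin ((BGᵀ *ᵥ θG t + BLᵀ *ᵥ θL t) k)) + u) ∧
      (∀ t ∈ Set.Ico (0 : ℝ) T,
        (0 : Fin nl → ℝ) =
          -((BL * diagonal γ) *ᵥ (fun k => Real.sin ((BGᵀ *ᵥ θG t + BLᵀ *ᵥ θL t) k))) + pstar) := by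
  classical
  obtain ⟨x, hx⟩ := hinit
  have hinj := aux_inj BL hrank
  have hN : IsUnit (BL * BLᵀ).det := by
    have h := aux_isUnit BL hinj (fun _ => 1) (fun _ => one_pos)
    simpa using h
  have hdpos : ∀ t ∈ Set.Ico (0:ℝ) T, ∀ k, 0 < γ k * Real.cos (η t k) := fun t ht k =>
    mul_pos (hγ k) (Real.cos_pos_of_mem_Ioo (hΩ t ht k))
  -- construction of θG
  set g : ℝ → Fin ng → ℝ := fun s => ωG (max s 0) with hg
  have hgc : ∀ s, s < T → ContinuousAt g s := by
    intro s hs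
    have hmem : max s 0 ∈ Set.Ico (0:ℝ) T := ⟨le_max_right _ _, max_lt hs hT⟩
    have hmax : ContinuousAt (fun s : ℝ => max s 0) s :=
      (continuous_id.max continuous_const).continuousAt
    exact ContinuousAt.comp (f := fun s : ℝ => max s 0) (x := s)
      (hωG _ hmem).continuousAt hmax
  set θG : ℝ → Fin ng → ℝ := fun t => (fun i => x (Sum.inl i)) + ∫ s in (0:ℝ)..t, g s with hθGdef
  have hθG0 : θG 0 = fun i => x (Sum.inl i) := by
    simp [hθGdef]
  have hθGd : ∀ t ∈ Set.Ico (0:ℝ) T, HasDerivAt θG (ωG t) t := by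
    intro t ht
    have hInt : IntervalIntegrable g MeasureTheory.volume 0 t := by
      apply ContinuousOn.intervalIntegrable
      intro s hs
      rw [Set.uIcc_of_le ht.1] at hs
      exact (hgc s (lt_of_le_of_lt hs.2 ht.2)).continuousWithinAt
    have hmeas : StronglyMeasurableAtFilter g (nhds t) MeasureTheory.volume :=
      ContinuousAt.stronglyMeasurableAtFilter isOpen_Iio (fun s hs => hgc s hs) t ht.2
    have h1 := intervalIntegral.integral_hasDerivAt_right hInt hmeas (hgc t ht.2)
    have h2 : HasDerivAt θG (g t) t := HasDerivAt.const_add _ h1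
    have h3 : g t = ωG t := by rw [hg]; simp [max_eq_left ht.1]
    exact h3 ▸ h2
  -- construction of θL
  set C : Matrix (Fin nl) (Fin m) ℝ := (BL * BLᵀ)⁻¹ * BL with hC
  set θL : ℝ → Fin nl → ℝ := fun t => C *ᵥ (η t - BGᵀ *ᵥ θG t) with hθLdef
  set θLd : ℝ → Fin nl → ℝ :=
    fun t => C *ᵥ ((projIncidence BG BL γ (η t))ᵀ *ᵥ ωG t - BGᵀ *ᵥ ωG t) with hθLddef
  have hθLdAt : ∀ t ∈ Set.Ico (0:ℝ) T, HasDerivAt θL (θLd t) t := fun t ht =>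
    aux_hasDerivAt_mulVec C ((hη t ht).sub (aux_hasDerivAt_mulVec BGᵀ (hθGd t ht)))
  -- the invariant ψ
  set P : Matrix (Fin m) (Fin m) ℝ := BLᵀ * (BL * BLᵀ)⁻¹ * BL with hP
  have hPB : (1 - P) * BLᵀ = 0 := by
    rw [hP, Matrix.sub_mul, Matrix.one_mul, Matrix.mul_assoc (BLᵀ * (BL * BLᵀ)⁻¹) BL BLᵀ,
      Matrix.mul_assoc BLᵀ (BL * BLᵀ)⁻¹ (BL * BLᵀ), Matrix.nonsing_inv_mul _ hN,
      Matrix.mul_one, sub_self]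
  set ψ : ℝ → Fin m → ℝ := fun t => (1 - P) *ᵥ (η t - BGᵀ *ᵥ θG t) with hψdef
  have hψd : ∀ t ∈ Set.Ico (0:ℝ) T, HasDerivAt ψ 0 t := by
    intro t ht
    have h1 := aux_hasDerivAt_mulVec (1 - P)
      ((hη t ht).sub (aux_hasDerivAt_mulVec BGᵀ (hθGd t ht)))
    have h2 : (1 - P) *ᵥ ((projIncidence BG BL γ (η t))ᵀ *ᵥ ωG t - BGᵀ *ᵥ ωG t) = 0 := by
      rw [← Matrix.sub_mulVec, Matrix.mulVec_mulVec, hP,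
        show (projIncidence BG BL γ (η t))ᵀ - BGᵀ =
          (BG * (1 - (diagonal (fun k => γ k * Real.cos (η t k)) * BLᵀ *
            (BL * diagonal (fun k => γ k * Real.cos (η t k)) * BLᵀ)⁻¹) * BL))ᵀ - BGᵀ from rfl,
        aux_key1 BG BL _ hN, Matrix.zero_mulVec]
    exact h2 ▸ h1
  have hψc := aux_const hψd
  have hsplit : η 0 - BGᵀ *ᵥ θG 0 = BLᵀ *ᵥ (fun j => x (Sum.inr j)) := by
    rw [hθG0, hx]
    funext k
    simp only [Matrix.mulVec, dotProduct, Matrix.transpose_apply, Pi.sub_apply,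
      Fintype.sum_sum_type, Matrix.fromRows_apply_inl, Matrix.fromRows_apply_inr]
    exact add_sub_cancel_left _ _
  have hψ0 : ψ 0 = 0 := by
    rw [hψdef]
    simp only
    rw [hsplit, Matrix.mulVec_mulVec, hPB, Matrix.zero_mulVec]
  have hBLrel : ∀ t ∈ Set.Ico (0:ℝ) T, BLᵀ *ᵥ θL t = η t - BGᵀ *ᵥ θG t := by
    intro t ht
    have h0 : ψ t = 0 := by rw [hψc t ht, hψ0]
    rw [hψdef] at h0
    simp only at h0
    rw [Matrix.sub_mulVec, Matrix.one_mulVec] at h0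
    have hv : P *ᵥ (η t - BGᵀ *ᵥ θG t) = η t - BGᵀ *ᵥ θG t := (sub_eq_zero.mp h0).symm
    calc BLᵀ *ᵥ θL t = (BLᵀ * C) *ᵥ (η t - BGᵀ *ᵥ θG t) := by
          rw [hθLdef]; simp only; rw [Matrix.mulVec_mulVec]
      _ = P *ᵥ (η t - BGᵀ *ᵥ θG t) := by rw [hP, hC, Matrix.mul_assoc]
      _ = η t - BGᵀ *ᵥ θG t := hv
  have hsum : ∀ t ∈ Set.Ico (0:ℝ) T, BGᵀ *ᵥ θG t + BLᵀ *ᵥ θL t = η t := by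
    intro t ht
    rw [hBLrel t ht]
    abel
  -- the power-balance invariant
  set φ : ℝ → Fin nl → ℝ := fun t => (BL * diagonal γ) *ᵥ (fun k => Real.sin (η t k)) with hφdef
  have hφd : ∀ t ∈ Set.Ico (0:ℝ) T, HasDerivAt φ 0 t := by
    intro t ht
    have hsin : HasDerivAt (fun s => (fun k => Real.sin (η s k)))
        (fun k => Real.cos (η t k) * (((projIncidence BG BL γ (η t))ᵀ *ᵥ ωG t) k)) t :=
      hasDerivAt_pi.2 fun k => (hasDerivAt_pi.1 (hη t ht) k).sin
    have h1 := aux_hasDerivAt_mulVec (BL * diagonal γ) hsin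
    have h2 : (BL * diagonal γ) *ᵥ
        (fun k => Real.cos (η t k) * (((projIncidence BG BL γ (η t))ᵀ *ᵥ ωG t) k)) = 0 := by
      have hveq : (fun k => Real.cos (η t k) * (((projIncidence BG BL γ (η t))ᵀ *ᵥ ωG t) k))
          = diagonal (fun k => Real.cos (η t k)) *ᵥ ((projIncidence BG BL γ (η t))ᵀ *ᵥ ωG t) := by
        funext k; rw [Matrix.mulVec_diagonal]
      have hK := aux_isUnit BL hinj (fun k => γ k * Real.cos (η t k)) (hdpos t ht)
      have hDD : BL * diagonal γ * diagonal (fun k => Real.cos (η t k))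
          = BL * diagonal (fun k => γ k * Real.cos (η t k)) := by
        rw [Matrix.mul_assoc, Matrix.diagonal_mul_diagonal]
      rw [hveq, Matrix.mulVec_mulVec, Matrix.mulVec_mulVec, hDD,
        show (projIncidence BG BL γ (η t))ᵀ =
          (BG * (1 - (diagonal (fun k => γ k * Real.cos (η t k)) * BLᵀ *
            (BL * diagonal (fun k => γ k * Real.cos (η t k)) * BLᵀ)⁻¹) * BL))ᵀ from rfl,
        aux_key2 BG BL _ (Matrix.diagonal_transpose _) hK, Matrix.zero_mulVec]
    exact h2 ▸ h1
  have hφc := aux_const hφd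
  have hφ0 : φ 0 = pstar := by
    rw [hφdef]
    simp only
    exact (sub_eq_zero.mp hcompat.symm).symm
  have hφt : ∀ t ∈ Set.Ico (0:ℝ) T,
      (BL * diagonal γ) *ᵥ (fun k => Real.sin (η t k)) = pstar := by
    intro t ht
    have := (hφc t ht).trans hφ0
    rw [hφdef] at this
    simpa using this
  refine ⟨θG, θL, θLd, hsum, hθGd, hθLdAt, ?_, ?_⟩
  · intro t ht
    rw [hsum t ht]
    exact hswing t ht
  · intro t ht
    rw [hsum t ht, hφt t ht]
    simp
end

section
/- (Conserved quantity.) Let (η, ω_G) : I → ℝ^m × ℝ^{n_g} be a differentiable solution of the reduced system η' = B_S(η)ᵀ ω_G, M ω_G' = −A ω_G − B_G Γ sin(η) + u on an interval I containing 0, with η(t) ∈ Ω for all t ∈ I. Then the vector B_L Γ sin(η(t)) is constant on I, i.e., B_L Γ sin(η(t)) = B_L Γ sin(η(0)) for all t ∈ I. -/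
open Matrix

lemma vecMul_eq_zero_of_rank {nl m : ℕ} (BL : Matrix (Fin nl) (Fin m) ℝ)
    (hrank : BL.rank = nl) {x : Fin nl → ℝ} (hx : x ᵥ* BL = 0) : x = 0 := by
  have hr : (BLᵀ).rank = nl := by rw [BL.rank_transpose, hrank]
  set L := (BLᵀ).mulVecLin with hL
  have hrange : Module.finrank ℝ (LinearMap.range L) = nl := hr
  have hrn := LinearMap.finrank_range_add_finrank_ker L
  have hdom : Module.finrank ℝ (Fin nl → ℝ) = nl := by simp
  have hker : Module.finrank ℝ (LinearMap.ker L) = 0 := by omega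
  have hbot : LinearMap.ker L = ⊥ := Submodule.finrank_eq_zero.mp hker
  have hxin : x ∈ LinearMap.ker L := by
    simp [hL, LinearMap.mem_ker, Matrix.mulVecLin_apply, Matrix.mulVec_transpose, hx]
  simpa [hbot] using hxin

lemma sandwich_posdef {nl m : ℕ} (BL : Matrix (Fin nl) (Fin m) ℝ)
    (hrank : BL.rank = nl) {d : Fin m → ℝ} (hd : ∀ k, 0 < d k) :
    (BL * diagonal d * BLᵀ).PosDef := by
  refine Matrix.posDef_iff_dotProduct_mulVec.mpr ⟨?_, ?_⟩
  · unfold Matrix.IsHermitian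
    rw [conjTranspose_eq_transpose_of_trivial]
    simp [Matrix.transpose_mul, Matrix.mul_assoc, Matrix.diagonal_transpose]
  · intro x hx
    have hy : x ᵥ* BL ≠ 0 := fun h => hx (vecMul_eq_zero_of_rank BL hrank h)
    have key : star x ⬝ᵥ (BL * diagonal d * BLᵀ) *ᵥ x
        = ∑ k, (x ᵥ* BL) k * (d k * (x ᵥ* BL) k) := by
      rw [star_trivial, ← Matrix.mulVec_mulVec, ← Matrix.mulVec_mulVec,
        Matrix.dotProduct_mulVec, Matrix.mulVec_transpose]
      simp [dotProduct, Matrix.mulVec_diagonal]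
    rw [key]
    obtain ⟨k0, hk0⟩ := Function.ne_iff.mp hy
    apply Finset.sum_pos'
    · intro k _
      have h : (x ᵥ* BL) k * (d k * (x ᵥ* BL) k) = d k * ((x ᵥ* BL) k * (x ᵥ* BL) k) := by ring
      rw [h]; exact mul_nonneg (hd k).le (mul_self_nonneg _)
    · refine ⟨k0, Finset.mem_univ _, ?_⟩
      have h : (x ᵥ* BL) k0 * (d k0 * (x ᵥ* BL) k0) = d k0 * ((x ᵥ* BL) k0 * (x ᵥ* BL) k0) := by
        ring
      rw [h]; exact mul_pos (hd k0) (mul_self_pos.mpr hk0)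

lemma key_identity {ng nl m : ℕ}
    (BG : Matrix (Fin ng) (Fin m) ℝ) (BL : Matrix (Fin nl) (Fin m) ℝ)
    (γ : Fin m → ℝ) (η : Fin m → ℝ) (hrank : BL.rank = nl)
    (hd : ∀ k, 0 < γ k * Real.cos (η k)) :
    BL * diagonal (fun k => γ k * Real.cos (η k)) * (projIncidence BG BL γ η)ᵀ = 0 := by
  set d : Fin m → ℝ := fun k => γ k * Real.cos (η k) with hdd
  set Γ' : Matrix (Fin m) (Fin m) ℝ := diagonal d with hΓ'
  set S : Matrix (Fin nl) (Fin nl) ℝ := BL * Γ' * BLᵀ with hS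
  have hpd : S.PosDef := sandwich_posdef BL hrank hd
  have hdet : IsUnit S.det := hpd.det_pos.ne'.isUnit
  have hSsymm : Sᵀ = S := by
    rw [hS]; simp [hΓ', Matrix.transpose_mul, Matrix.mul_assoc, Matrix.diagonal_transpose]
  have hSinv : (S⁻¹)ᵀ = S⁻¹ := by rw [Matrix.transpose_nonsing_inv, hSsymm]
  have hΓsymm : Γ'ᵀ = Γ' := by rw [hΓ', Matrix.diagonal_transpose]
  have step : BL * Γ' * ((Γ' * BLᵀ * S⁻¹) * BL)ᵀ = BL * Γ' := by
    simp only [Matrix.transpose_mul, hSinv, hΓsymm, Matrix.transpose_transpose]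
    calc BL * Γ' * (BLᵀ * (S⁻¹ * (BL * Γ')))
        = (BL * Γ' * BLᵀ) * S⁻¹ * (BL * Γ') := by simp only [Matrix.mul_assoc]
      _ = BL * Γ' := by rw [← hS, Matrix.mul_nonsing_inv _ hdet, Matrix.one_mul]
  have main : BL * Γ' * (1 - (Γ' * BLᵀ * S⁻¹) * BL)ᵀ = 0 := by
    rw [Matrix.transpose_sub, Matrix.transpose_one, Matrix.mul_sub, Matrix.mul_one, step, sub_self]
  have hproj : projIncidence BG BL γ η = BG * (1 - (Γ' * BLᵀ * S⁻¹) * BL) := rfl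
  rw [hproj, Matrix.transpose_mul, ← Matrix.mul_assoc, main, Matrix.zero_mul]

theorem conserved_quantity_nonlinear
    {ng nl m : ℕ} (hng : 0 < ng) (hnl : 0 < nl) (hm : 0 < m)
    (BG : Matrix (Fin ng) (Fin m) ℝ) (BL : Matrix (Fin nl) (Fin m) ℝ)
    (γ : Fin m → ℝ) (hγ : ∀ k, 0 < γ k)
    (hrank : BL.rank = nl)
    (Md Ad : Fin ng → ℝ) (hM : ∀ i, 0 < Md i) (hA : ∀ i, 0 < Ad i)
    (u : Fin ng → ℝ)
    (I : Set ℝ) (hI0 : (0 : ℝ) ∈ I) (hIconv : Convex ℝ I)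
    (η : ℝ → Fin m → ℝ) (ωG ωG' : ℝ → Fin ng → ℝ)
    (hη : ∀ t ∈ I, HasDerivAt η ((projIncidence BG BL γ (η t))ᵀ *ᵥ ωG t) t)
    (hωG : ∀ t ∈ I, HasDerivAt ωG (ωG' t) t)
    (hswing : ∀ t ∈ I,
      diagonal Md *ᵥ ωG' t =
        -(diagonal Ad *ᵥ ωG t) - (BG * diagonal γ) *ᵥ (fun k => Real.sin (η t k)) + u)
    (hΩ : ∀ t ∈ I, ∀ k, η t k ∈ Set.Ioo (-(Real.pi / 2)) (Real.pi / 2)) :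
    ∀ t ∈ I,
      (BL * diagonal γ) *ᵥ (fun k => Real.sin (η t k)) =
        (BL * diagonal γ) *ᵥ (fun k => Real.sin (η 0 k)) := by
  set F : ℝ → Fin nl → ℝ := fun s => (BL * diagonal γ) *ᵥ (fun k => Real.sin (η s k)) with hF
  have hderiv : ∀ t ∈ I, HasDerivAt F 0 t := by
    intro t ht
    set v : Fin m → ℝ := (projIncidence BG BL γ (η t))ᵀ *ᵥ ωG t with hv
    have hηk : ∀ k, HasDerivAt (fun s => η s k) (v k) t :=
      fun k => hasDerivAt_pi.mp (hη t ht) k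
    have hcos : ∀ k, 0 < Real.cos (η t k) :=
      fun k => Real.cos_pos_of_mem_Ioo (hΩ t ht k)
    have hd : ∀ k, 0 < γ k * Real.cos (η t k) := fun k => mul_pos (hγ k) (hcos k)
    set w : Fin nl → ℝ :=
      fun i => ∑ k, (BL * diagonal γ) i k * (Real.cos (η t k) * v k) with hw
    have hFw : HasDerivAt F w t := by
      apply hasDerivAt_pi.mpr
      intro i
      have heq : (fun s => F s i)
          = fun s => ∑ k, (BL * diagonal γ) i k * Real.sin (η s k) := by
        funext s; simp [hF, Matrix.mulVec, dotProduct]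
      rw [heq]
      exact HasDerivAt.fun_sum fun k _ =>
        ((Real.hasDerivAt_sin (η t k)).comp t (hηk k)).const_mul _
    have hw0 : w = 0 := by
      have h1 : w = (BL * diagonal γ * diagonal fun k => Real.cos (η t k)) *ᵥ v := by
        funext i
        simp [hw, Matrix.mulVec, dotProduct, Matrix.mul_diagonal, mul_assoc]
      have h2 : BL * diagonal γ * diagonal (fun k => Real.cos (η t k))
          = BL * diagonal (fun k => γ k * Real.cos (η t k)) := by
        rw [Matrix.mul_assoc, Matrix.diagonal_mul_diagonal]
      rw [h1, h2, hv, Matrix.mulVec_mulVec, key_identity BG BL γ (η t) hrank hd,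
        Matrix.zero_mulVec]
    rw [hw0] at hFw
    exact hFw
  intro t ht
  have hb := hIconv.norm_image_sub_le_of_norm_hasDerivWithin_le
    (C := 0) (f' := fun _ => (0 : Fin nl → ℝ))
    (fun x hx => (hderiv x hx).hasDerivWithinAt)
    (fun x hx => by simp) hI0 ht
  have : ‖F t - F 0‖ ≤ 0 := by simpa using hb
  have h0 : F t - F 0 = 0 := by
    simpa using norm_le_zero_iff.mp this
  have := sub_eq_zero.mp h0
  exact this
end

section
/- (Linear conserved quantity.) Let (η, ω_G) : I → ℝ^m × ℝ^{n_g} be a differentiable solution of the approximated system η' = B_Sᵀ ω_G, M ω_G' = −A ω_G − B_G Γ η + u on an interval I containing 0, where B_S = B_G(I − B_L⁺B_L) with B_L⁺ = Γ B_Lᵀ (B_L Γ B_Lᵀ)⁻¹. Then B_L Γ η(t) is constant on I, i.e., B_L Γ η(t) = B_L Γ η(0) for all t ∈ I. -/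
open Matrix

theorem conserved_quantity_linear
    {ng nl m : ℕ} (hng : 0 < ng) (hnl : 0 < nl) (hm : 0 < m)
    (BG : Matrix (Fin ng) (Fin m) ℝ) (BL : Matrix (Fin nl) (Fin m) ℝ)
    (γ : Fin m → ℝ) (hγ : ∀ k, 0 < γ k)
    (hrank : BL.rank = nl)
    (hinv : IsUnit (BL * diagonal γ * BLᵀ).det)
    (Md Ad : Fin ng → ℝ) (hM : ∀ i, 0 < Md i) (hA : ∀ i, 0 < Ad i)
    (u : Fin ng → ℝ)
    (I : Set ℝ) (hI0 : (0 : ℝ) ∈ I) (hIconv : Convex ℝ I)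
    (η : ℝ → Fin m → ℝ) (ωG ωG' : ℝ → Fin ng → ℝ)
    (hη : ∀ t ∈ I, HasDerivAt η
      ((BG * (1 - (diagonal γ * BLᵀ * (BL * diagonal γ * BLᵀ)⁻¹) * BL))ᵀ *ᵥ ωG t) t)
    (hωG : ∀ t ∈ I, HasDerivAt ωG (ωG' t) t)
    (hswing : ∀ t ∈ I,
      diagonal Md *ᵥ ωG' t =
        -(diagonal Ad *ᵥ ωG t) - (BG * diagonal γ) *ᵥ η t + u) :
    ∀ t ∈ I, (BL * diagonal γ) *ᵥ η t = (BL * diagonal γ) *ᵥ η 0 := by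
  set Γ : Matrix (Fin m) (Fin m) ℝ := diagonal γ with hΓ
  set S : Matrix (Fin nl) (Fin nl) ℝ := BL * Γ * BLᵀ with hS
  have hSsymm : Sᵀ = S := by
    rw [hS, transpose_mul, transpose_mul, transpose_transpose, hΓ, diagonal_transpose,
      Matrix.mul_assoc]
  -- key algebraic identity
  have hkey : (BL * Γ) * (BG * (1 - (Γ * BLᵀ * S⁻¹) * BL))ᵀ = 0 := by
    have hT : ((Γ * BLᵀ * S⁻¹) * BL)ᵀ = BLᵀ * (S⁻¹ * (BL * Γ)) := by
      rw [transpose_mul, transpose_mul, transpose_mul, transpose_nonsing_inv, hSsymm,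
        diagonal_transpose]
      simp [Matrix.mul_assoc, hΓ]
    have h2 : (BL * Γ) * (BLᵀ * (S⁻¹ * (BL * Γ))) = BL * Γ := by
      rw [← Matrix.mul_assoc, ← Matrix.mul_assoc, ← hS, ← Matrix.mul_assoc,
        Matrix.mul_nonsing_inv S hinv, Matrix.one_mul]
    rw [transpose_mul, transpose_sub, transpose_one, hT, ← Matrix.mul_assoc,
      Matrix.mul_sub, Matrix.mul_one, h2, sub_self, Matrix.zero_mul]
  -- derivative of (BL * Γ) *ᵥ η is zero on I
  set L : (Fin m → ℝ) →L[ℝ] (Fin nl → ℝ) :=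
    (Matrix.mulVecLin (BL * Γ)).toContinuousLinearMap with hL
  have hderiv : ∀ t ∈ I, HasDerivAt (fun s => (BL * Γ) *ᵥ η s) 0 t := by
    intro t ht
    have h := (L.hasFDerivAt.comp_hasDerivAt t (hη t ht))
    have : L ((BG * (1 - (Γ * BLᵀ * S⁻¹) * BL))ᵀ *ᵥ ωG t) = 0 := by
      show (BL * Γ) *ᵥ ((BG * (1 - (Γ * BLᵀ * S⁻¹) * BL))ᵀ *ᵥ ωG t) = 0
      rw [Matrix.mulVec_mulVec, hkey, Matrix.zero_mulVec]
    rw [this] at h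
    exact h
  intro t ht
  have hsub : ∀ x ∈ I, ∀ y ∈ I,
      ‖(BL * Γ) *ᵥ η x - (BL * Γ) *ᵥ η y‖ ≤ 0 * ‖x - y‖ := by
    intro x hx y hy
    exact hIconv.norm_image_sub_le_of_norm_hasDerivWithin_le
      (fun s hs => (hderiv s hs).hasDerivWithinAt)
      (fun s hs => by simp) hy hx
  have := hsub t ht 0 hI0
  simp only [zero_mul] at this
  have h0 : (BL * Γ) *ᵥ η t - (BL * Γ) *ᵥ η 0 = 0 :=
    norm_le_zero_iff.mp this
  exact sub_eq_zero.mp h0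
end

section
/- Suppose (η, ω_G) : I → ℝ^m × ℝ^{n_g} is a differentiable solution of η' = B_Sᵀ ω_G, M ω_G' = −A ω_G − B_G Γ η + u, with η(0) ∈ im Bᵀ where B = col(B_G, B_L), and let p* = B_L Γ η(0). Define Π = I − B_L⁺B_L and η_S = Πᵀ η. Then (η_S, ω_G) is a solution of the linear reduced model η_S' = B_Sᵀ ω_G, M ω_G' = −A ω_G − B_S Γ η_S + u − p̂, where p̂ = B_G Γ B_Lᵀ (B_L Γ B_Lᵀ)⁻¹ p*. -/
open Matrix

private lemma hasDerivAt_mulVec' {n m : ℕ} (A : Matrix (Fin n) (Fin m) ℝ)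
    {f : ℝ → Fin m → ℝ} {f' : Fin m → ℝ} {t : ℝ} (h : HasDerivAt f f' t) :
    HasDerivAt (fun s => A *ᵥ f s) (A *ᵥ f') t := by
  rw [hasDerivAt_pi] at h ⊢
  intro i
  simpa [Matrix.mulVec, dotProduct] using
    HasDerivAt.fun_sum (fun j _ => ((h j).const_mul (A i j)))

theorem projection_recovers_linear_reduced_model
    {ng nl m : ℕ} (hng : 0 < ng) (hnl : 0 < nl) (hm : 0 < m)
    (BG : Matrix (Fin ng) (Fin m) ℝ) (BL : Matrix (Fin nl) (Fin m) ℝ)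
    (γ : Fin m → ℝ) (hγ : ∀ k, 0 < γ k)
    (hrank : BL.rank = nl)
    (hinv : IsUnit (BL * diagonal γ * BLᵀ).det)
    (Md Ad : Fin ng → ℝ) (hM : ∀ i, 0 < Md i) (hA : ∀ i, 0 < Ad i)
    (u : Fin ng → ℝ)
    (I : Set ℝ) (hI0 : (0 : ℝ) ∈ I) (hIconv : Convex ℝ I)
    (η : ℝ → Fin m → ℝ) (ωG ωG' : ℝ → Fin ng → ℝ)
    (hη : ∀ t ∈ I, HasDerivAt η
      ((BG * (1 - (diagonal γ * BLᵀ * (BL * diagonal γ * BLᵀ)⁻¹) * BL))ᵀ *ᵥ ωG t) t)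
    (hωG : ∀ t ∈ I, HasDerivAt ωG (ωG' t) t)
    (hswing : ∀ t ∈ I,
      diagonal Md *ᵥ ωG' t =
        -(diagonal Ad *ᵥ ωG t) - (BG * diagonal γ) *ᵥ η t + u)
    (hinit : ∃ x : Fin ng ⊕ Fin nl → ℝ, η 0 = (Matrix.fromRows BG BL)ᵀ *ᵥ x) :
    (∀ t ∈ I,
      HasDerivAt (fun s => (1 - (diagonal γ * BLᵀ * (BL * diagonal γ * BLᵀ)⁻¹) * BL)ᵀ *ᵥ η s)
        ((BG * (1 - (diagonal γ * BLᵀ * (BL * diagonal γ * BLᵀ)⁻¹) * BL))ᵀ *ᵥ ωG t) t) ∧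
    (∀ t ∈ I,
      diagonal Md *ᵥ ωG' t =
        -(diagonal Ad *ᵥ ωG t) -
          ((BG * (1 - (diagonal γ * BLᵀ * (BL * diagonal γ * BLᵀ)⁻¹) * BL)) * diagonal γ) *ᵥ
            ((1 - (diagonal γ * BLᵀ * (BL * diagonal γ * BLᵀ)⁻¹) * BL)ᵀ *ᵥ η t)
          + u - (BG * diagonal γ * BLᵀ * (BL * diagonal γ * BLᵀ)⁻¹) *ᵥ
              ((BL * diagonal γ) *ᵥ η 0)) := by
  set D := diagonal γ with hD
  set S := BL * D * BLᵀ with hS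
  set K := S⁻¹ with hK
  set Q := D * BLᵀ * K * BL with hQ
  set P : Matrix (Fin m) (Fin m) ℝ := 1 - Q with hP
  -- basic inverse facts
  have hSK : S * K = 1 := Matrix.mul_nonsing_inv S hinv
  have hKS : K * S = 1 := Matrix.nonsing_inv_mul S hinv
  have hDT : Dᵀ = D := Matrix.diagonal_transpose γ
  have hST : Sᵀ = S := by
    rw [hS, Matrix.transpose_mul, Matrix.transpose_mul, Matrix.transpose_transpose, hDT,
      Matrix.mul_assoc]
  have hKT : Kᵀ = K := by
    show S⁻¹ᵀ = S⁻¹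
    rw [Matrix.transpose_nonsing_inv, hST]
  -- cancellation helpers (right-associated forms)
  have hKSX : ∀ {p : ℕ} (X : Matrix (Fin nl) (Fin p) ℝ),
      K * (BL * (D * (BLᵀ * X))) = X := by
    intro p X
    have h1 : K * (BL * (D * (BLᵀ * X))) = (K * (BL * D * BLᵀ)) * X := by
      simp only [Matrix.mul_assoc]
    rw [h1, ← hS, hKS, Matrix.one_mul]
  have hSKX : ∀ {p : ℕ} (X : Matrix (Fin nl) (Fin p) ℝ),
      BL * (D * (BLᵀ * (K * X))) = X := by
    intro p X
    have h1 : BL * (D * (BLᵀ * (K * X))) = (BL * D * BLᵀ * K) * X := by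
      simp only [Matrix.mul_assoc]
    rw [h1, ← hS, hSK, Matrix.one_mul]
  -- transpose of Q
  have hQT : Qᵀ = BLᵀ * K * BL * D := by
    rw [hQ]
    simp only [Matrix.transpose_mul, Matrix.transpose_transpose, hDT, hKT, Matrix.mul_assoc]
  -- BL * D * Qᵀ = BL * D, hence BL * D * Pᵀ = 0
  have hBLDP : BL * D * Pᵀ = 0 := by
    have h1 : BL * D * Qᵀ = BL * D := by
      rw [hQT]
      have : BL * D * (BLᵀ * K * BL * D) = BL * (D * (BLᵀ * (K * (BL * D)))) := by
        simp only [Matrix.mul_assoc]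
      rw [this, hSKX]
    rw [hP, Matrix.transpose_sub, Matrix.transpose_one, Matrix.mul_sub, h1,
      Matrix.mul_one, sub_self]
  -- Q idempotent, P idempotent
  have hQQ : Q * Q = Q := by
    conv_lhs => rw [hQ]
    have : D * BLᵀ * K * BL * Q = D * (BLᵀ * (K * (BL * (D * (BLᵀ * (K * BL)))))) := by
      rw [hQ]; simp only [Matrix.mul_assoc]
    rw [this, hKSX, hQ]
    simp only [Matrix.mul_assoc]
  have hPP : P * P = P := by
    rw [hP]
    have : (1 - Q) * (1 - Q) = 1 - Q - (Q - Q * Q) := by noncomm_ring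
    rw [this, hQQ, sub_self, sub_zero]
  -- D * Qᵀ = Q * D
  have hDQT : D * Qᵀ = Q * D := by
    rw [hQT, hQ]; simp only [Matrix.mul_assoc]
  -- Q * D * Qᵀ = Q * D
  have hQDQT : Q * D * Qᵀ = Q * D := by
    rw [hQT, hQ]
    have : D * BLᵀ * K * BL * D * (BLᵀ * K * BL * D) =
        D * (BLᵀ * (K * (BL * (D * (BLᵀ * (K * (BL * D))))))) := by
      simp only [Matrix.mul_assoc]
    rw [this, hKSX]
    simp only [Matrix.mul_assoc]
  -- P D Pᵀ = D - Q D
  have hPDPT : P * D * Pᵀ = D - Q * D := by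
    rw [hP, Matrix.transpose_sub, Matrix.transpose_one]
    have : (1 - Q) * D * (1 - Qᵀ) = D - D * Qᵀ - Q * D + Q * D * Qᵀ := by noncomm_ring
    rw [this, hDQT, hQDQT]
    abel
  -- constancy of (BL * D) *ᵥ η on I
  have hconst : ∀ t ∈ I, (BL * D) *ᵥ η t = (BL * D) *ᵥ η 0 := by
    intro t ht
    have hderiv : ∀ s ∈ I, HasFDerivWithinAt (fun s => (BL * D) *ᵥ η s)
        (0 : ℝ →L[ℝ] (Fin nl → ℝ)) I s := by
      intro s hs
      have h1 : HasDerivAt (fun s => (BL * D) *ᵥ η s)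
          ((BL * D) *ᵥ ((BG * P)ᵀ *ᵥ ωG s)) s := hasDerivAt_mulVec' _ (hη s hs)
      have h2 : (BL * D) *ᵥ ((BG * P)ᵀ *ᵥ ωG s) = 0 := by
        rw [Matrix.mulVec_mulVec]
        have : BL * D * (BG * P)ᵀ = 0 := by
          rw [Matrix.transpose_mul, ← Matrix.mul_assoc, hBLDP, Matrix.zero_mul]
        rw [this, Matrix.zero_mulVec]
      rw [h2] at h1
      have hzero : ContinuousLinearMap.smulRight (1 : ℝ →L[ℝ] ℝ)
          (0 : Fin nl → ℝ) = 0 := by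
        ext x
        simp
      exact hzero ▸ h1.hasFDerivAt.hasFDerivWithinAt
    have hmvt := hIconv.norm_image_sub_le_of_norm_hasFDerivWithin_le (C := 0)
      hderiv (fun s _ => by simp) hI0 ht
    have h0 : (BL * D) *ᵥ η t - (BL * D) *ᵥ η 0 = 0 := by
      have : ‖(BL * D) *ᵥ η t - (BL * D) *ᵥ η 0‖ ≤ 0 := by simpa using hmvt
      simpa using norm_le_zero_iff.mp this
    exact sub_eq_zero.mp h0
  constructor
  · intro t ht
    have h1 : HasDerivAt (fun s => Pᵀ *ᵥ η s) (Pᵀ *ᵥ ((BG * P)ᵀ *ᵥ ωG t)) t :=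
      hasDerivAt_mulVec' _ (hη t ht)
    have h2 : Pᵀ *ᵥ ((BG * P)ᵀ *ᵥ ωG t) = (BG * P)ᵀ *ᵥ ωG t := by
      rw [Matrix.mulVec_mulVec, ← Matrix.transpose_mul, Matrix.mul_assoc, hPP]
    rwa [h2] at h1
  · intro t ht
    have key : (BG * P * D) *ᵥ (Pᵀ *ᵥ η t)
        + (BG * D * BLᵀ * K) *ᵥ ((BL * D) *ᵥ η 0) = (BG * D) *ᵥ η t := by
      rw [← hconst t ht, Matrix.mulVec_mulVec, Matrix.mulVec_mulVec, ← Matrix.add_mulVec]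
      have e1 : BG * P * D * Pᵀ = BG * (P * D * Pᵀ) := by simp only [Matrix.mul_assoc]
      have e2 : BG * D * BLᵀ * K * (BL * D) = BG * (Q * D) := by
        rw [hQ]; simp only [Matrix.mul_assoc]
      have e3 : BG * P * D * Pᵀ + BG * D * BLᵀ * K * (BL * D) = BG * D := by
        rw [e1, e2, hPDPT, Matrix.mul_sub]; abel
      rw [e3]
    rw [hswing t ht, ← key]
    abel
end

section
/- (Identifiability of equilibrium angles.) Let B ∈ ℝ^{n×m}, Γ ∈ ℝ^{m×m} a positive definite diagonal matrix, and suppose η, η̄ ∈ Ω = (−π/2, π/2)^m with η ∈ im Bᵀ and η̄ ∈ im Bᵀ. If B Γ (sin(η) − sin(η̄)) = 0, then η = η̄. -/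
open Matrix

theorem identifiability_of_equilibrium_angles
    {n m : ℕ} (hn : 0 < n) (hm : 0 < m)
    (B : Matrix (Fin n) (Fin m) ℝ)
    (γ : Fin m → ℝ) (hγ : ∀ k, 0 < γ k)
    (η ηb : Fin m → ℝ)
    (hη : ∀ k, η k ∈ Set.Ioo (-(Real.pi / 2)) (Real.pi / 2))
    (hηb : ∀ k, ηb k ∈ Set.Ioo (-(Real.pi / 2)) (Real.pi / 2))
    (hηim : ∃ x : Fin n → ℝ, η = Bᵀ *ᵥ x)
    (hηbim : ∃ x : Fin n → ℝ, ηb = Bᵀ *ᵥ x)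
    (hzero : (B * diagonal γ) *ᵥ
      ((fun k => Real.sin (η k)) - fun k => Real.sin (ηb k)) = 0) :
    η = ηb := by
  obtain ⟨x, hx⟩ := hηim
  obtain ⟨y, hy⟩ := hηbim
  set s : Fin m → ℝ := ((fun k => Real.sin (η k)) - fun k => Real.sin (ηb k)) with hs
  have hmem : ∀ k, η k ∈ Set.Icc (-(Real.pi / 2)) (Real.pi / 2) := fun k =>
    Set.mem_Icc_of_Ioo (hη k)
  have hmemb : ∀ k, ηb k ∈ Set.Icc (-(Real.pi / 2)) (Real.pi / 2) := fun k =>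
    Set.mem_Icc_of_Ioo (hηb k)
  have h1 : (x - y) ⬝ᵥ ((B * diagonal γ) *ᵥ s) = 0 := by
    rw [hzero, dotProduct_zero]
  have hvm : (x - y) ᵥ* B = η - ηb := by
    rw [Matrix.sub_vecMul, hx, hy, Matrix.mulVec_transpose, Matrix.mulVec_transpose]
  have h2 : (x - y) ⬝ᵥ ((B * diagonal γ) *ᵥ s)
      = ∑ k, (η k - ηb k) * (γ k * s k) := by
    rw [← Matrix.mulVec_mulVec, Matrix.dotProduct_mulVec, hvm]
    simp [dotProduct, Matrix.mulVec_diagonal, Pi.sub_apply]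
  have hnonneg : ∀ k ∈ Finset.univ, 0 ≤ (η k - ηb k) * (γ k * s k) := by
    intro k _
    have hsk : s k = Real.sin (η k) - Real.sin (ηb k) := rfl
    rcases le_total (ηb k) (η k) with h | h
    · have : Real.sin (ηb k) ≤ Real.sin (η k) :=
        Real.strictMonoOn_sin.monotoneOn (hmemb k) (hmem k) h
      exact mul_nonneg (by linarith) (mul_nonneg (hγ k).le (by rw [hsk]; linarith))
    · have : Real.sin (η k) ≤ Real.sin (ηb k) :=
        Real.strictMonoOn_sin.monotoneOn (hmem k) (hmemb k) h
      have h1' : η k - ηb k ≤ 0 := by linarith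
      have h2' : γ k * s k ≤ 0 := mul_nonpos_of_nonneg_of_nonpos (hγ k).le (by rw [hsk]; linarith)
      nlinarith
  have hsum0 : ∑ k, (η k - ηb k) * (γ k * s k) = 0 := by rw [← h2, h1]
  have hzero' := (Finset.sum_eq_zero_iff_of_nonneg hnonneg).mp hsum0
  funext k
  have hk := hzero' k (Finset.mem_univ k)
  rcases mul_eq_zero.mp hk with h | h
  · linarith [sub_eq_zero.mp h]
  · rcases mul_eq_zero.mp h with h' | h'
    · exact absurd h' (hγ k).ne'
    · have : Real.sin (η k) = Real.sin (ηb k) := by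
        have hsk : s k = Real.sin (η k) - Real.sin (ηb k) := rfl
        rw [hsk] at h'; linarith
      exact Real.strictMonoOn_sin.injOn (hmem k) (hmemb k) this
end
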